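/- Let G be a linear algebraic group over a field F, H a closed subgroup, and Γ a subgroup of G(F) fitting in a commutative diagram with exact rows 1 → Γ₀ → Γ → Q → 1 and 1 → H(F) → G(F) → C(F) where G/H ≅ C, such that Γ₀ maps into H(F) with Zariski-dense image in H, and the image of Q in C(F) is Zariski-dense in C. Then the image of Γ in G(F) is Zariski-dense in G. -/

import Mathlib

/-- Density argument: let `G` be a (Zariski-)topological group with normal closed subgroup
`H` and quotient `C = G/H`, and let `1 → Γ₀ → Γ → Q → 1` be an exact sequence of groups
mapping into `H ≤ G → G/H` compatibly.  If the image of `Γ₀` is dense in `H` and the image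
of `Q` is dense in `C`, then the image of `Γ` is dense in `G`. -/
theorem stmt_11 {G Γ₀ Γ Q : Type*} [Group G] [TopologicalSpace G] [IsTopologicalGroup G]
    [Group Γ₀] [Group Γ] [Group Q]
    (H : Subgroup G) [H.Normal] (hHcl : IsClosed (H : Set G))
    (i : Γ₀ →* Γ) (p : Γ →* Q) (hp : Function.Surjective p) (hexact : p.ker = i.range)
    (ρ : Γ →* G)
    (hρ₀ : ∀ x : Γ₀, ρ (i x) ∈ H)
    (hdense₀ : closure (Set.range fun x : Γ₀ => ρ (i x)) = (H : Set G))
    (σ : Q →* G ⧸ H)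
    (hcomm : ∀ γ : Γ, σ (p γ) = QuotientGroup.mk (ρ γ))
    (hdenseQ : Dense (Set.range σ)) :
    Dense (Set.range ρ) := by
  set K := ρ.range.topologicalClosure with hK
  have hKeq : (K : Set G) = closure (Set.range ρ) := by
    simp [hK, Subgroup.topologicalClosure, MonoidHom.coe_range]
  have hHK : (H : Set G) ⊆ (K : Set G) := by
    rw [← hdense₀, hKeq]
    exact closure_mono (by rintro _ ⟨x, rfl⟩; exact ⟨i x, rfl⟩)
  have hKclosed : IsClosed (K : Set G) := hKeq ▸ isClosed_closure
  -- complement of K is saturated, so image of complement = complement of image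
  have hcompl : (QuotientGroup.mk '' ((K : Set G)ᶜ) : Set (G ⧸ H))
      = (QuotientGroup.mk '' (K : Set G))ᶜ := by
    ext q
    constructor
    · rintro ⟨g, hg, rfl⟩ ⟨k, hk, hkg⟩
      have hmem : k⁻¹ * g ∈ H := QuotientGroup.eq.mp hkg
      exact hg (by simpa using K.mul_mem hk (hHK hmem))
    · intro hq
      obtain ⟨g, rfl⟩ := QuotientGroup.mk_surjective q
      exact ⟨g, fun hg => hq ⟨g, hg, rfl⟩, rfl⟩
  have hclosedim : IsClosed (QuotientGroup.mk '' (K : Set G) : Set (G ⧸ H)) := by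
    rw [← isOpen_compl_iff, ← hcompl]
    exact QuotientGroup.isOpenMap_coe _ hKclosed.isOpen_compl
  have hsub : Set.range σ ⊆ QuotientGroup.mk '' (K : Set G) := by
    rintro _ ⟨q, rfl⟩
    obtain ⟨γ, rfl⟩ := hp q
    exact ⟨ρ γ, (hKeq ▸ subset_closure ⟨γ, rfl⟩ : ρ γ ∈ (K : Set G)), (hcomm γ).symm⟩
  have himuniv : (QuotientGroup.mk '' (K : Set G) : Set (G ⧸ H)) = Set.univ := by
    have := (hdenseQ.mono hsub).closure_eq
    rw [hclosedim.closure_eq] at this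
    exact this
  have hKuniv : (K : Set G) = Set.univ := by
    ext g
    simp only [Set.mem_univ, iff_true]
    have : (QuotientGroup.mk g : G ⧸ H) ∈ QuotientGroup.mk '' (K : Set G) := by
      rw [himuniv]; trivial
    obtain ⟨k, hk, hkg⟩ := this
    have hmem : k⁻¹ * g ∈ H := QuotientGroup.eq.mp hkg
    simpa using K.mul_mem hk (hHK hmem)
  rw [dense_iff_closure_eq, ← hKeq, hKuniv]
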